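/- Let n ≥ 1 be an integer, c ∈ (0,1] and η > 0 reals with η·(1 − ln c) ≤ 1. Then for all δ₁, …, δ_n ∈ (0,1] with Σ_{i=1}^n δ_i ≤ n·c, it holds that Σ_{i=1}^n ln(1/δ_i)·𝟙{η·δ_i ≤ c} ≥ n·ln(1/c); that is, the minimum of the objective Σ_{i=1}^n ln(1/δ_i)·𝟙{η·δ_i ≤ c} over the constraint set is attained at δ₁ = ⋯ = δ_n = c. -/
import Mathlib

lemma pointwise_log_ind (c η d : ℝ) (hc0 : 0 < c) (hc1 : c ≤ 1)
    (hη : 0 < η) (hηc : η * (1 - Real.log c) ≤ 1)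
    (hd0 : 0 < d) :
    Real.log (1 / c) + (c - d) / c ≤
      Real.log (1 / d) * (if η * d ≤ c then (1 : ℝ) else 0) := by
  by_cases h : η * d ≤ c
  · simp only [h, if_pos, mul_one]
    rw [Real.log_div one_ne_zero (ne_of_gt hc0), Real.log_div one_ne_zero (ne_of_gt hd0)]
    have hlog : Real.log (d / c) ≤ d / c - 1 := Real.log_le_sub_one_of_pos (by positivity)
    rw [Real.log_div (ne_of_gt hd0) (ne_of_gt hc0)] at hlog
    have : (c - d) / c = 1 - d / c := by field_simp
    rw [this]
    linarith
  · simp only [h, if_neg, mul_zero]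
    push_neg at h
    -- d > c/η ≥ c(1 - log c)
    have h1 : c * (1 - Real.log c) ≤ d := by
      have hinv : 1 - Real.log c ≤ 1 / η := by
        rw [le_div_iff₀ hη]; linarith [hηc]
      calc c * (1 - Real.log c) ≤ c * (1 / η) := by
            apply mul_le_mul_of_nonneg_left hinv (le_of_lt hc0)
        _ = c / η := by ring
        _ ≤ d := by rw [div_le_iff₀ hη]; linarith [h]
    rw [Real.log_div one_ne_zero (ne_of_gt hc0)]
    have : (c - d) / c = 1 - d / c := by field_simp
    rw [this]
    have h2 : 1 - Real.log c ≤ d / c := by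
      rw [le_div_iff₀ hc0]; nlinarith [h1]
    simp only [if_false, mul_zero, Real.log_one]
    linarith

/-- The constrained minimum of `∑ᵢ ln(1/δᵢ)·𝟙{η δᵢ ≤ c}` subject to `∑ᵢ δᵢ ≤ n c`
is attained at `δ₁ = ⋯ = δₙ = c`. -/
theorem log_indicator_minimization
    (n : ℕ) (hn : 1 ≤ n) (c η : ℝ) (hc0 : 0 < c) (hc1 : c ≤ 1)
    (hη : 0 < η) (hηc : η * (1 - Real.log c) ≤ 1)
    (δ : Fin n → ℝ) (hδ0 : ∀ i, 0 < δ i) (hδ1 : ∀ i, δ i ≤ 1)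
    (hsum : ∑ i, δ i ≤ n * c) :
    (n : ℝ) * Real.log (1 / c) ≤
      ∑ i, Real.log (1 / δ i) * (if η * δ i ≤ c then (1 : ℝ) else 0) := by
  have key : ∑ i, (Real.log (1 / c) + (c - δ i) / c) ≤
      ∑ i, Real.log (1 / δ i) * (if η * δ i ≤ c then (1 : ℝ) else 0) :=
    Finset.sum_le_sum fun i _ => pointwise_log_ind c η (δ i) hc0 hc1 hη hηc (hδ0 i)
  refine le_trans ?_ key
  rw [Finset.sum_add_distrib, Finset.sum_const, Finset.card_univ, Fintype.card_fin,
    nsmul_eq_mul]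
  have : (0:ℝ) ≤ ∑ i, (c - δ i) / c := by
    rw [← Finset.sum_div]
    apply div_nonneg _ (le_of_lt hc0)
    have : ∑ i : Fin n, (c - δ i) = n * c - ∑ i, δ i := by
      rw [Finset.sum_sub_distrib, Finset.sum_const, Finset.card_univ, Fintype.card_fin,
        nsmul_eq_mul]
    rw [this]; linarith
  linarith
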